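/- Let α > 0, β ≥ 0 with β < α + 1. Then λ* = 1 + α - β is the unique solution in (1 - β, ∞) of the equation ∑_{k=0}^∞ ∏_{i=0}^{k} (i+α)/(λ + i + α + β) = 1. -/

import Mathlib

open Filter Finset Real

private lemma stmt5_partial_sum (α c : ℝ) (hα : 0 < α) (hc : 1 < c) (n : ℕ) :
    ∑ k ∈ Finset.range (n + 1), ∏ i ∈ Finset.range (k + 1), ((i : ℝ) + α) / ((i : ℝ) + α + c)
      = α / (c - 1) - ((n : ℝ) + 1 + α) / (c - 1)
          * ∏ i ∈ Finset.range (n + 1), ((i : ℝ) + α) / ((i : ℝ) + α + c) := by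
  have hc1 : c - 1 ≠ 0 := by linarith
  induction n with
  | zero =>
    simp only [zero_add, Finset.sum_range_one, Finset.prod_range_one, Nat.cast_zero]
    have h0 : (0 : ℝ) + α + c ≠ 0 := by positivity
    field_simp
    ring
  | succ n ih =>
    rw [Finset.sum_range_succ, Finset.prod_range_succ _ (n + 1), ih]
    generalize (∏ i ∈ Finset.range (n + 1), ((i : ℝ) + α) / ((i : ℝ) + α + c)) = P
    have hd : ((n : ℝ) + 1) + α + c ≠ 0 := by positivity
    push_cast
    field_simp
    ring

private lemma stmt5_prod_bound (α c : ℝ) (hα : 0 < α) (hc : 1 < c) (n : ℕ) :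
    ∏ i ∈ Finset.range (n + 1), ((i : ℝ) + α) / ((i : ℝ) + α + c)
      ≤ (α + c) ^ c * ((n : ℝ) + 1 + α + c) ^ (-c) := by
  have hcpos : (0:ℝ) < c := by linarith
  have hT : (0:ℝ) < (n : ℝ) + 1 + α + c := by positivity
  have h0 : (0:ℝ) < α + c := by positivity
  have step1 : ∏ i ∈ Finset.range (n + 1), ((i : ℝ) + α) / ((i : ℝ) + α + c)
      ≤ Real.exp (∑ i ∈ Finset.range (n + 1), -(c / ((i : ℝ) + α + c))) := by
    rw [Real.exp_sum]
    apply Finset.prod_le_prod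
    · intro i _
      have : (0:ℝ) < (i : ℝ) + α + c := by positivity
      positivity
    · intro i _
      have hi : (0:ℝ) < (i : ℝ) + α + c := by positivity
      have heq : ((i : ℝ) + α) / ((i : ℝ) + α + c) = -(c / ((i : ℝ) + α + c)) + 1 := by
        field_simp
        ring
      rw [heq]
      exact Real.add_one_le_exp _
  have step2 : Real.log ((n : ℝ) + 1 + α + c) - Real.log (α + c)
      ≤ ∑ i ∈ Finset.range (n + 1), 1 / ((i : ℝ) + α + c) := by
    have tel := Finset.sum_range_sub (f := fun i : ℕ => Real.log ((i : ℝ) + α + c)) (n + 1)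
    simp only [Nat.cast_add, Nat.cast_one, Nat.cast_zero] at tel
    have : ((0:ℝ) + α + c) = α + c := by ring
    rw [this] at tel
    rw [← tel]
    apply Finset.sum_le_sum
    intro i _
    have hi : (0:ℝ) < (i : ℝ) + α + c := by positivity
    have hlog : Real.log (((i : ℝ) + 1 + α + c) / ((i : ℝ) + α + c))
        ≤ ((i : ℝ) + 1 + α + c) / ((i : ℝ) + α + c) - 1 :=
      Real.log_le_sub_one_of_pos (by positivity)
    have hdiv : Real.log (((i : ℝ) + 1 + α + c) / ((i : ℝ) + α + c))
        = Real.log ((i : ℝ) + 1 + α + c) - Real.log ((i : ℝ) + α + c) :=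
      Real.log_div (by positivity) (by positivity)
    have hrest : ((i : ℝ) + 1 + α + c) / ((i : ℝ) + α + c) - 1 = 1 / ((i : ℝ) + α + c) := by
      field_simp
      ring
    rw [hdiv, hrest] at hlog
    exact hlog
  have step3 : ∑ i ∈ Finset.range (n + 1), -(c / ((i : ℝ) + α + c))
      ≤ -(c * (Real.log ((n : ℝ) + 1 + α + c) - Real.log (α + c))) := by
    have hsum : ∑ i ∈ Finset.range (n + 1), -(c / ((i : ℝ) + α + c))
        = -(c * ∑ i ∈ Finset.range (n + 1), 1 / ((i : ℝ) + α + c)) := by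
      rw [Finset.mul_sum, ← Finset.sum_neg_distrib]
      apply Finset.sum_congr rfl
      intro i _
      ring
    rw [hsum]
    have := mul_le_mul_of_nonneg_left step2 hcpos.le
    linarith
  calc ∏ i ∈ Finset.range (n + 1), ((i : ℝ) + α) / ((i : ℝ) + α + c)
      ≤ Real.exp (∑ i ∈ Finset.range (n + 1), -(c / ((i : ℝ) + α + c))) := step1
    _ ≤ Real.exp (-(c * (Real.log ((n : ℝ) + 1 + α + c) - Real.log (α + c)))) :=
        Real.exp_le_exp.mpr step3
    _ = (α + c) ^ c * ((n : ℝ) + 1 + α + c) ^ (-c) := by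
        rw [Real.rpow_def_of_pos h0, Real.rpow_def_of_pos hT, ← Real.exp_add]
        congr 1
        ring

private lemma stmt5_hasSum (α c : ℝ) (hα : 0 < α) (hc : 1 < c) :
    HasSum (fun k : ℕ => ∏ i ∈ Finset.range (k + 1), ((i : ℝ) + α) / ((i : ℝ) + α + c))
      (α / (c - 1)) := by
  have hc1 : (0:ℝ) < c - 1 := by linarith
  have hnn : ∀ k : ℕ, 0 ≤ ∏ i ∈ Finset.range (k + 1), ((i : ℝ) + α) / ((i : ℝ) + α + c) := by
    intro k
    apply Finset.prod_nonneg
    intro i _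
    have : (0:ℝ) < (i : ℝ) + α + c := by positivity
    positivity
  rw [hasSum_iff_tendsto_nat_of_nonneg hnn]
  rw [← tendsto_add_atTop_iff_nat 1]
  have heq : ∀ n : ℕ, ∑ k ∈ Finset.range (n + 1),
      ∏ i ∈ Finset.range (k + 1), ((i : ℝ) + α) / ((i : ℝ) + α + c)
      = α / (c - 1) - ((n : ℝ) + 1 + α) / (c - 1)
          * ∏ i ∈ Finset.range (n + 1), ((i : ℝ) + α) / ((i : ℝ) + α + c) :=
    stmt5_partial_sum α c hα hc
  simp only [heq]
  have hR : Tendsto (fun n : ℕ => ((n : ℝ) + 1 + α) / (c - 1)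
      * ∏ i ∈ Finset.range (n + 1), ((i : ℝ) + α) / ((i : ℝ) + α + c)) atTop (nhds 0) := by
    have hTlim : Tendsto (fun n : ℕ => (n : ℝ) + 1 + α + c) atTop atTop := by
      apply tendsto_atTop_add_const_right
      apply tendsto_atTop_add_const_right
      apply tendsto_atTop_add_const_right
      exact tendsto_natCast_atTop_atTop
    have hbnd : Tendsto (fun n : ℕ => (α + c) ^ c / (c - 1) * ((n : ℝ) + 1 + α + c) ^ (-(c - 1)))
        atTop (nhds 0) := by
      have := ((tendsto_rpow_neg_atTop hc1).comp hTlim).const_mul ((α + c) ^ c / (c - 1))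
      simpa using this
    apply squeeze_zero
    · intro n
      have h1 : (0:ℝ) ≤ ((n : ℝ) + 1 + α) / (c - 1) := by positivity
      exact mul_nonneg h1 (hnn n)
    · intro n
      have hT : (0:ℝ) < (n : ℝ) + 1 + α + c := by positivity
      have h0 : (0:ℝ) < α + c := by positivity
      have hb := stmt5_prod_bound α c hα hc n
      have h1 : ((n : ℝ) + 1 + α) / (c - 1) ≤ ((n : ℝ) + 1 + α + c) / (c - 1) := by
        exact (div_le_div_iff_of_pos_right hc1).mpr (by linarith)
      have hTT : ((n : ℝ) + 1 + α + c) ^ (-(c - 1))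
          = ((n : ℝ) + 1 + α + c) * ((n : ℝ) + 1 + α + c) ^ (-c) := by
        rw [show -(c - 1) = 1 + -c by ring, Real.rpow_add hT, Real.rpow_one]
      calc ((n : ℝ) + 1 + α) / (c - 1) * ∏ i ∈ Finset.range (n + 1), ((i : ℝ) + α) / ((i : ℝ) + α + c)
          ≤ ((n : ℝ) + 1 + α + c) / (c - 1) * ((α + c) ^ c * ((n : ℝ) + 1 + α + c) ^ (-c)) := by
            apply mul_le_mul h1 hb (hnn n)
            positivity
        _ = (α + c) ^ c / (c - 1) * (((n : ℝ) + 1 + α + c) * ((n : ℝ) + 1 + α + c) ^ (-c)) := by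
            ring
        _ = (α + c) ^ c / (c - 1) * ((n : ℝ) + 1 + α + c) ^ (-(c - 1)) := by rw [hTT]
    · exact hbnd
  have := (tendsto_const_nhds (x := α / (c - 1)) (f := atTop (α := ℕ))).sub hR
  simpa using this

theorem stmt_5 (α β : ℝ) (hα : 0 < α) (hβ : 0 ≤ β) (hsup : β < α + 1) :
    ∀ lam : ℝ, 1 - β < lam →
      ((∑' k : ℕ, ∏ i ∈ Finset.range (k + 1), ((i : ℝ) + α) / (lam + i + α + β)) = 1 ↔
        lam = 1 + α - β) := by
  intro lam hlam
  set c : ℝ := lam + β with hcdef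
  have hc : 1 < c := by simp only [hcdef]; linarith
  have hterm : ∀ k : ℕ, ∏ i ∈ Finset.range (k + 1), ((i : ℝ) + α) / (lam + i + α + β)
      = ∏ i ∈ Finset.range (k + 1), ((i : ℝ) + α) / ((i : ℝ) + α + c) := by
    intro k
    apply Finset.prod_congr rfl
    intro i _
    congr 1
    simp only [hcdef]
    ring
  rw [tsum_congr hterm, (stmt5_hasSum α c hα hc).tsum_eq]
  have hc1 : c - 1 ≠ 0 := by linarith
  rw [div_eq_one_iff_eq hc1]
  constructor
  · intro h
    simp only [hcdef] at h
    linarith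
  · intro h
    simp only [hcdef, h]
    ring
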